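/- For every integer n ≥ 2, δ(n+2,2) = δ(n+1,2) + δ(n,2); that is, the sequence n ↦ δ(n,2) satisfies the Fibonacci recurrence. -/

import Mathlib

/-- The integer encoded (in binary, most significant digit first) by the `i`-th row
of the binary matrix `A`, i.e. `x_i = ∑_j a_{ij} 2^{m-j}` (1-indexed). -/
def rowVal {n m : ℕ} (A : Fin n → Fin m → Fin 2) (i : Fin n) : ℕ :=
  ∑ j : Fin m, (A i j : ℕ) * 2 ^ (m - 1 - (j : ℕ))

/-- The integer encoded by the `j`-th column of `A`, i.e. `y_j = ∑_i a_{ij} 2^{n-i}`. -/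
def colVal {n m : ℕ} (A : Fin n → Fin m → Fin 2) (j : Fin m) : ℕ :=
  ∑ i : Fin n, (A i j : ℕ) * 2 ^ (n - 1 - (i : ℕ))

/-- `A ∈ 𝔠_{n×m}`: rows and columns sorted in lexicographically nondecreasing order. -/
def memC {n m : ℕ} (A : Fin n → Fin m → Fin 2) : Prop :=
  Monotone (rowVal A) ∧ Monotone (colVal A)

/-- `A ∈ 𝔡_{n×m}`: rows and columns sorted in lexicographically nonincreasing order. -/
def memD {n m : ℕ} (A : Fin n → Fin m → Fin 2) : Prop :=
  Antitone (rowVal A) ∧ Antitone (colVal A)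

/-- `Λ_n^k`: n×n binary matrices with exactly `k` ones in each row and each column. -/
def lambdaSet (n k : ℕ) : Set (Fin n → Fin n → Fin 2) :=
  {A | (∀ i, ∑ j, (A i j : ℕ) = k) ∧ (∀ j, ∑ i, (A i j : ℕ) = k)}

/-- `Γ_n^k = 𝔠_{n×n} ∩ Λ_n^k`. -/
def GammaSet (n k : ℕ) : Set (Fin n → Fin n → Fin 2) :=
  {A | memC A} ∩ lambdaSet n k

/-- `Δ_n^k = 𝔡_{n×n} ∩ Λ_n^k`. -/
def DeltaSet (n k : ℕ) : Set (Fin n → Fin n → Fin 2) :=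
  {A | memD A} ∩ lambdaSet n k

/-- `γ(n,k) = |Γ_n^k|`. -/
noncomputable def gammaCard (n k : ℕ) : ℕ := (GammaSet n k).ncard

/-- `δ(n,k) = |Δ_n^k|`. -/
noncomputable def deltaCard (n k : ℕ) : ℕ := (DeltaSet n k).ncard

-- basics test
section Helpers
variable {n m k : ℕ}

lemma fin_two_nat_le (a : Fin 2) : (a : ℕ) ≤ 1 := Fin.is_le a

lemma fin_two_cases (a : Fin 2) : (a : ℕ) = 0 ∨ (a : ℕ) = 1 := by omega

lemma geo_sum (k : ℕ) : ∑ i : Fin k, 2 ^ (k - 1 - (i : ℕ)) = 2 ^ k - 1 := by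
  induction k with
  | zero => simp
  | succ k ih =>
    rw [Fin.sum_univ_succ]
    have he : (∑ i : Fin k, 2 ^ (k + 1 - 1 - ((i.succ : Fin (k+1)):ℕ))) = 2^k - 1 := by
      rw [← ih]
      refine Finset.sum_congr rfl fun i _ => ?_
      congr 1
      simp only [Fin.val_succ]
      omega
    rw [he]
    have : 1 ≤ 2 ^ k := Nat.one_le_two_pow
    have h2 : (2:ℕ) ^ (k+1) = 2 * 2^k := by ring
    simp only [Fin.val_zero, Nat.sub_zero, Nat.add_sub_cancel]
    omega

lemma wsum_le (g : Fin k → Fin 2) (w : Fin k → ℕ) (c : ℕ) (hw : ∀ i, w i ≤ c) :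
    ∑ i, (g i : ℕ) * w i ≤ (∑ i, (g i : ℕ)) * c := by
  rw [Finset.sum_mul]
  exact Finset.sum_le_sum fun i _ => Nat.mul_le_mul le_rfl (hw i)

lemma tail_le (g : Fin k → Fin 2) : ∑ i, (g i : ℕ) * 2 ^ (k - 1 - (i:ℕ)) ≤ 2 ^ k - 1 := by
  calc ∑ i, (g i : ℕ) * 2 ^ (k - 1 - (i:ℕ)) ≤ ∑ i : Fin k, 2 ^ (k - 1 - (i:ℕ)) :=
        Finset.sum_le_sum fun i _ => by
          have := fin_two_nat_le (g i); nlinarith [Nat.one_le_two_pow (n := k - 1 - (i:ℕ))]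
    _ = 2 ^ k - 1 := geo_sum k

lemma sum_coe_eq_zero {g : Fin k → Fin 2} (h : ∑ i, (g i : ℕ) = 0) (i : Fin k) : (g i : ℕ) = 0 :=
  Finset.sum_eq_zero_iff.mp h i (Finset.mem_univ i)

lemma wsum_eq_zero {g : Fin k → Fin 2} (h : ∑ i, (g i : ℕ) = 0) (w : Fin k → ℕ) :
    ∑ i, (g i : ℕ) * w i = 0 :=
  Finset.sum_eq_zero fun i _ => by rw [sum_coe_eq_zero h i, zero_mul]

lemma exists_one_of_sum_ne_zero {g : Fin k → Fin 2} (h : ∑ i, (g i : ℕ) ≠ 0) :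
    ∃ i, (g i : ℕ) = 1 := by
  by_contra hc
  push_neg at hc
  exact h (Finset.sum_eq_zero fun i _ => by have := fin_two_cases (g i); have := hc i; omega)

lemma antitone_of_consec {f : Fin m → ℕ} (h : ∀ i j : Fin m, (j:ℕ) = (i:ℕ) + 1 → f j ≤ f i) :
    Antitone f := by
  intro a b hab
  obtain ⟨c, hc⟩ : ∃ c : ℕ, (b:ℕ) = (a:ℕ) + c := ⟨(b:ℕ) - (a:ℕ), by
    have := (Fin.le_iff_val_le_val.mp hab); omega⟩
  clear hab
  induction c generalizing b with
  | zero => have : a = b := Fin.ext (by omega); rw [this]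
  | succ c ih =>
    have hlt : (a:ℕ) + c < m := by have := b.isLt; omega
    exact le_trans (h ⟨(a:ℕ)+c, hlt⟩ b (by show (b:ℕ) = (a:ℕ) + c + 1; omega)) (@ih ⟨(a:ℕ)+c, hlt⟩ rfl)

lemma fin_eq_ss {j : Fin (n+2)} (h : 2 ≤ (j:ℕ)) : ∃ j' : Fin n, j = j'.succ.succ := by
  refine ⟨⟨(j:ℕ) - 2, by have := j.isLt; omega⟩, ?_⟩
  apply Fin.ext; simp; omega

lemma fin_eq_s {j : Fin (n+1)} (h : 1 ≤ (j:ℕ)) : ∃ j' : Fin n, j = j'.succ := by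
  refine ⟨⟨(j:ℕ) - 1, by have := j.isLt; omega⟩, ?_⟩
  apply Fin.ext; simp; omega

end Helpers
section Transpose
variable {n m : ℕ}

def Tr (A : Fin n → Fin m → Fin 2) : Fin m → Fin n → Fin 2 := fun i j => A j i

lemma rowVal_Tr (A : Fin n → Fin m → Fin 2) : rowVal (Tr A) = colVal A := rfl
lemma colVal_Tr (A : Fin n → Fin m → Fin 2) : colVal (Tr A) = rowVal A := rfl

lemma Tr_mem_Delta {k : ℕ} {A : Fin n → Fin n → Fin 2} (hA : A ∈ DeltaSet n k) :
    Tr A ∈ DeltaSet n k := by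
  obtain ⟨⟨h1, h2⟩, h3, h4⟩ := hA
  exact ⟨⟨by rw [rowVal_Tr]; exact h2, by rw [colVal_Tr]; exact h1⟩, h4, h3⟩

end Transpose

section Peel
variable {n m : ℕ}

lemma rowVal_succ (A : Fin n → Fin (m+1) → Fin 2) (i : Fin n) :
    rowVal A i = (A i 0 : ℕ) * 2 ^ m + ∑ j : Fin m, (A i j.succ : ℕ) * 2 ^ (m - 1 - (j:ℕ)) := by
  unfold rowVal
  rw [Fin.sum_univ_succ]
  simp only [Fin.val_zero, Nat.sub_zero, Fin.val_succ, Nat.add_sub_cancel]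
  congr 1
  refine Finset.sum_congr rfl fun j _ => ?_
  have he : m - ((j:ℕ) + 1) = m - 1 - (j:ℕ) := by omega
  rw [he]

lemma rowVal_peel2 (A : Fin n → Fin (m+2) → Fin 2) (i : Fin n) :
    rowVal A i = (A i 0 : ℕ) * 2 ^ (m+1) + (A i 1 : ℕ) * 2 ^ m
      + ∑ j : Fin m, (A i j.succ.succ : ℕ) * 2 ^ (m - 1 - (j:ℕ)) := by
  rw [rowVal_succ, Fin.sum_univ_succ]
  have h01 : ((0 : Fin (m+1)).succ : Fin (m+2)) = 1 := rfl
  rw [h01, ← add_assoc]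
  have h2 : m + 1 - 1 - ((0 : Fin (m+1)):ℕ) = m := by simp
  rw [h2]
  congr 1
  refine Finset.sum_congr rfl fun j _ => ?_
  have he : m + 1 - 1 - ((j.succ : Fin (m+1)):ℕ) = m - 1 - (j:ℕ) := by
    simp only [Fin.val_succ]; omega
  rw [he]

lemma colVal_succ (A : Fin (m+1) → Fin n → Fin 2) (j : Fin n) :
    colVal A j = (A 0 j : ℕ) * 2 ^ m + ∑ i : Fin m, (A i.succ j : ℕ) * 2 ^ (m - 1 - (i:ℕ)) := by
  rw [← rowVal_Tr]; exact rowVal_succ (Tr A) j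

lemma colVal_peel2 (A : Fin (m+2) → Fin n → Fin 2) (j : Fin n) :
    colVal A j = (A 0 j : ℕ) * 2 ^ (m+1) + (A 1 j : ℕ) * 2 ^ m
      + ∑ i : Fin m, (A i.succ.succ j : ℕ) * 2 ^ (m - 1 - (i:ℕ)) := by
  rw [← rowVal_Tr]; exact rowVal_peel2 (Tr A) j

lemma sum_peel2 (g : Fin (m+2) → Fin 2) :
    ∑ j, (g j : ℕ) = (g 0 : ℕ) + (g 1 : ℕ) + ∑ j : Fin m, (g j.succ.succ : ℕ) := by
  rw [Fin.sum_univ_succ, Fin.sum_univ_succ, ← add_assoc]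
  rfl

lemma rowVal_le (A : Fin n → Fin m → Fin 2) (i : Fin n) : rowVal A i ≤ 2 ^ m - 1 :=
  tail_le _

end Peel
section Bounds
variable {n m : ℕ}

lemma colVal_le_of_zero {A : Fin (m+1) → Fin n → Fin 2} {j : Fin n} (h : (A 0 j : ℕ) = 0) :
    colVal A j ≤ 2 ^ m - 1 := by
  rw [colVal_succ, h]
  simpa using tail_le (fun i : Fin m => A i.succ j)

lemma colVal_ge_of_one {A : Fin (m+1) → Fin n → Fin 2} {j : Fin n} (h : (A 0 j : ℕ) = 1) :
    2 ^ m ≤ colVal A j := by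
  rw [colVal_succ, h]
  simp

lemma colVal_le_of_zero2 {A : Fin (m+2) → Fin n → Fin 2} {j : Fin n}
    (h0 : (A 0 j : ℕ) = 0) (h1 : (A 1 j : ℕ) = 0) : colVal A j ≤ 2 ^ m - 1 := by
  rw [colVal_peel2, h0, h1]
  simpa using tail_le (fun i : Fin m => A i.succ.succ j)

lemma colVal_ge_of_one_row1 {A : Fin (m+2) → Fin n → Fin 2} {j : Fin n} (h : (A 1 j : ℕ) = 1) :
    2 ^ m ≤ colVal A j := by
  rw [colVal_peel2, h, one_mul]
  calc 2^m ≤ (A 0 j : ℕ) * 2 ^ (m+1) + 2^m := Nat.le_add_left _ _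
    _ ≤ _ := Nat.le_add_right _ _

end Bounds

section Structure
variable {n : ℕ}

lemma corner_row {A : Fin (n+2) → Fin (n+2) → Fin 2} (hA : A ∈ DeltaSet (n+2) 2) :
    (A 0 0 : ℕ) = 1 ∧ (A 0 1 : ℕ) = 1 ∧ ∀ j : Fin n, (A 0 j.succ.succ : ℕ) = 0 := by
  obtain ⟨⟨hrow, hcol⟩, hrs, hcs⟩ := hA
  have h2p : 1 ≤ (2:ℕ)^(n+1) := Nat.one_le_two_pow
  have ha00 : (A 0 0 : ℕ) = 1 := by
    by_contra h
    have h0 : (A 0 0 : ℕ) = 0 := by have := fin_two_cases (A 0 0); omega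
    obtain ⟨j, hj⟩ := exists_one_of_sum_ne_zero (g := A 0) (by rw [hrs 0]; omega)
    have hy0 : colVal A 0 ≤ 2^(n+1) - 1 := colVal_le_of_zero h0
    have hyj : 2^(n+1) ≤ colVal A j := colVal_ge_of_one hj
    have := hcol (Fin.zero_le j)
    omega
  have ha01 : (A 0 1 : ℕ) = 1 := by
    by_contra h
    have h0 : (A 0 1 : ℕ) = 0 := by have := fin_two_cases (A 0 1); omega
    have hps := sum_peel2 (A 0)
    rw [hrs 0, ha00, h0] at hps
    obtain ⟨j, hj⟩ := exists_one_of_sum_ne_zero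
      (g := fun j : Fin n => A 0 j.succ.succ) (by beta_reduce; omega)
    have hy1 : colVal A 1 ≤ 2^(n+1) - 1 := colVal_le_of_zero h0
    have hyj : 2^(n+1) ≤ colVal A j.succ.succ := colVal_ge_of_one hj
    have hle : (1 : Fin (n+2)) ≤ j.succ.succ := by
      rw [Fin.le_def]
      simp [Fin.val_succ]
    have := hcol hle
    omega
  refine ⟨ha00, ha01, fun j => ?_⟩
  have hps := sum_peel2 (A 0)
  rw [hrs 0, ha00, ha01] at hps
  exact sum_coe_eq_zero (g := fun j : Fin n => A 0 j.succ.succ) (by beta_reduce; omega) j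

lemma corner {A : Fin (n+2) → Fin (n+2) → Fin 2} (hA : A ∈ DeltaSet (n+2) 2) :
    (A 0 0 : ℕ) = 1 ∧ (A 0 1 : ℕ) = 1 ∧ (A 1 0 : ℕ) = 1 ∧
      (∀ j : Fin n, (A 0 j.succ.succ : ℕ) = 0) ∧ ∀ i : Fin n, (A i.succ.succ 0 : ℕ) = 0 := by
  obtain ⟨h1, h2, h3⟩ := corner_row hA
  obtain ⟨-, h2', h3'⟩ := corner_row (Tr_mem_Delta hA)
  exact ⟨h1, h2, h2', h3, h3'⟩

lemma caseA_row {A : Fin (n+2) → Fin (n+2) → Fin 2} (hA : A ∈ DeltaSet (n+2) 2)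
    (h11 : (A 1 1 : ℕ) = 1) : ∀ j : Fin n, (A 1 j.succ.succ : ℕ) = 0 := by
  obtain ⟨-, -, h10, -, -⟩ := corner hA
  have hps := sum_peel2 (A 1)
  rw [hA.2.1 1, h10, h11] at hps
  exact fun j => sum_coe_eq_zero (g := fun j : Fin n => A 1 j.succ.succ) (by beta_reduce; omega) j

lemma caseB_row {A : Fin (n+3) → Fin (n+3) → Fin 2} (hA : A ∈ DeltaSet (n+3) 2)
    (h11 : (A 1 1 : ℕ) = 0) :
    (A 1 2 : ℕ) = 1 ∧ ∀ j : Fin n, (A 1 j.succ.succ.succ : ℕ) = 0 := by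
  obtain ⟨h00, h01, h10, hr0, hc0⟩ := corner (n := n+1) hA
  obtain ⟨⟨hrow, hcol⟩, hrs, hcs⟩ := hA
  have h2p : 1 ≤ (2:ℕ)^(n+1) := Nat.one_le_two_pow
  have hps := sum_peel2 (A 1)
  rw [hrs 1, h10, h11] at hps
  have hpeel : ∑ j : Fin (n+1), (A 1 j.succ.succ : ℕ)
      = (A 1 2 : ℕ) + ∑ j : Fin n, (A 1 j.succ.succ.succ : ℕ) := by
    rw [Fin.sum_univ_succ]
    rfl
  have ha12 : (A 1 2 : ℕ) = 1 := by
    by_contra h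
    have h0 : (A 1 2 : ℕ) = 0 := by have := fin_two_cases (A 1 2); omega
    rw [hpeel, h0] at hps
    obtain ⟨j, hj⟩ := exists_one_of_sum_ne_zero
      (g := fun j : Fin n => A 1 j.succ.succ.succ) (by beta_reduce; omega)
    have ha02 : (A 0 2 : ℕ) = 0 := hr0 0
    have hy2 : colVal A 2 ≤ 2^(n+1) - 1 := colVal_le_of_zero2 ha02 h0
    have hyj : 2^(n+1) ≤ colVal A j.succ.succ.succ := colVal_ge_of_one_row1 hj
    have hle : (2 : Fin (n+3)) ≤ j.succ.succ.succ := by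
      rw [Fin.le_def]
      simp [Fin.val_succ]
      exact le_trans (Nat.mod_le _ _) (by omega)
    have := hcol hle
    omega
  rw [hpeel, ha12] at hps
  exact ⟨ha12, fun j => sum_coe_eq_zero
    (g := fun j : Fin n => A 1 j.succ.succ.succ) (by beta_reduce; omega) j⟩

lemma caseB {A : Fin (n+3) → Fin (n+3) → Fin 2} (hA : A ∈ DeltaSet (n+3) 2)
    (h11 : (A 1 1 : ℕ) = 0) :
    (A 1 2 : ℕ) = 1 ∧ (A 2 1 : ℕ) = 1 ∧ (∀ j : Fin n, (A 1 j.succ.succ.succ : ℕ) = 0) ∧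
      ∀ i : Fin n, (A i.succ.succ.succ 1 : ℕ) = 0 := by
  obtain ⟨h1, h2⟩ := caseB_row hA h11
  obtain ⟨h1', h2'⟩ := caseB_row (Tr_mem_Delta hA) h11
  exact ⟨h1, h1', h2, h2'⟩

end Structure
section Maps
variable {k : ℕ}

def growA (B : Fin k → Fin k → Fin 2) (i j : Fin (k+2)) : Fin 2 :=
  if hi : (i:ℕ) < 2 then (if (j:ℕ) < 2 then 1 else 0)
  else if hj : (j:ℕ) < 2 then 0
  else B ⟨(i:ℕ)-2, by have := i.isLt; omega⟩ ⟨(j:ℕ)-2, by have := j.isLt; omega⟩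

def shrinkA (A : Fin (k+2) → Fin (k+2) → Fin 2) (i j : Fin k) : Fin 2 :=
  A i.succ.succ j.succ.succ

def growB (B : Fin (k+2) → Fin (k+2) → Fin 2) (i j : Fin (k+3)) : Fin 2 :=
  if hi : (i:ℕ) = 0 then (if (j:ℕ) < 2 then 1 else 0)
  else if hj : (j:ℕ) = 0 then (if (i:ℕ) < 2 then 1 else 0)
  else if (i:ℕ) = 1 ∧ (j:ℕ) = 1 then 0
  else B ⟨(i:ℕ)-1, by have := i.isLt; omega⟩ ⟨(j:ℕ)-1, by have := j.isLt; omega⟩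

def shrinkB (A : Fin (k+3) → Fin (k+3) → Fin 2) (i j : Fin (k+2)) : Fin 2 :=
  if (i:ℕ) = 0 ∧ (j:ℕ) = 0 then 1 else A i.succ j.succ

lemma Tr_growA (B : Fin k → Fin k → Fin 2) : Tr (growA B) = growA (Tr B) := by
  funext i j
  simp only [Tr, growA]
  split_ifs <;> rfl

lemma Tr_shrinkA (A : Fin (k+2) → Fin (k+2) → Fin 2) : Tr (shrinkA A) = shrinkA (Tr A) := rfl

lemma Tr_growB (B : Fin (k+2) → Fin (k+2) → Fin 2) : Tr (growB B) = growB (Tr B) := by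
  funext i j
  simp only [Tr, growB]
  split_ifs with h1 h2 h3 h4 h5 <;> first | rfl | omega

lemma Tr_shrinkB (A : Fin (k+3) → Fin (k+3) → Fin 2) : Tr (shrinkB A) = shrinkB (Tr A) := by
  funext i j
  simp only [Tr, shrinkB]
  split_ifs <;> first | rfl | omega

-- entry lemmas for growA
lemma growA_tl {B : Fin k → Fin k → Fin 2} {i j : Fin (k+2)} (hi : (i:ℕ) < 2) (hj : (j:ℕ) < 2) :
    growA B i j = 1 := by simp [growA, hi, hj]

lemma growA_tr {B : Fin k → Fin k → Fin 2} {i j : Fin (k+2)} (hi : (i:ℕ) < 2) (hj : ¬(j:ℕ) < 2) :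
    growA B i j = 0 := by simp [growA, hi, hj]

lemma growA_bl {B : Fin k → Fin k → Fin 2} {i j : Fin (k+2)} (hi : ¬(i:ℕ) < 2) (hj : (j:ℕ) < 2) :
    growA B i j = 0 := by simp [growA, hi, hj]

lemma growA_ss {B : Fin k → Fin k → Fin 2} (i j : Fin k) :
    growA B i.succ.succ j.succ.succ = B i j := by
  have hi : ¬((i.succ.succ : Fin (k+2)) : ℕ) < 2 := by simp [Fin.val_succ]
  have hj : ¬((j.succ.succ : Fin (k+2)) : ℕ) < 2 := by simp [Fin.val_succ]
  simp only [growA, dif_neg hi, dif_neg hj]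
  congr 1 <;> (apply Fin.ext; simp [Fin.val_succ])

-- entry lemmas for growB
lemma growB_row0 {B : Fin (k+2) → Fin (k+2) → Fin 2} {j : Fin (k+3)} :
    growB B 0 j = if (j:ℕ) < 2 then 1 else 0 := by simp [growB]

lemma growB_col0 {B : Fin (k+2) → Fin (k+2) → Fin 2} {i : Fin (k+3)} (hi : (i:ℕ) ≠ 0) :
    growB B i 0 = if (i:ℕ) < 2 then 1 else 0 := by simp [growB, hi]

lemma growB_11 {B : Fin (k+2) → Fin (k+2) → Fin 2} : growB B 1 1 = 0 := by
  simp [growB]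

lemma growB_gen {B : Fin (k+2) → Fin (k+2) → Fin 2} {i j : Fin (k+3)}
    (hi : (i:ℕ) ≠ 0) (hj : (j:ℕ) ≠ 0) (h : ¬((i:ℕ) = 1 ∧ (j:ℕ) = 1)) :
    growB B i j = B ⟨(i:ℕ)-1, by have := i.isLt; omega⟩ ⟨(j:ℕ)-1, by have := j.isLt; omega⟩ := by
  simp only [growB, dif_neg hi, dif_neg hj, if_neg h]

lemma growB_1ss {B : Fin (k+2) → Fin (k+2) → Fin 2} (j : Fin (k+1)) :
    growB B 1 j.succ.succ = B 0 j.succ := by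
  rw [growB_gen (by simp) (by simp [Fin.val_succ]) (by simp [Fin.val_succ])]
  congr 1 <;> (apply Fin.ext; simp [Fin.val_succ])

lemma growB_ss1 {B : Fin (k+2) → Fin (k+2) → Fin 2} (i : Fin (k+1)) :
    growB B i.succ.succ 1 = B i.succ 0 := by
  rw [growB_gen (by simp [Fin.val_succ]) (by simp) (by simp [Fin.val_succ])]
  congr 1 <;> (apply Fin.ext; simp [Fin.val_succ])

lemma growB_ssss {B : Fin (k+2) → Fin (k+2) → Fin 2} (i j : Fin (k+1)) :
    growB B i.succ.succ j.succ.succ = B i.succ j.succ := by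
  rw [growB_gen (by simp [Fin.val_succ]) (by simp [Fin.val_succ]) (by simp [Fin.val_succ])]
  congr 1 <;> (apply Fin.ext; simp [Fin.val_succ])

lemma growB_ss0 {B : Fin (k+2) → Fin (k+2) → Fin 2} (i : Fin (k+1)) :
    growB B i.succ.succ 0 = 0 := by
  rw [growB_col0 (by simp [Fin.val_succ])]
  simp [Fin.val_succ]

lemma growB_0ss {B : Fin (k+2) → Fin (k+2) → Fin 2} (j : Fin (k+1)) :
    growB B 0 j.succ.succ = 0 := by
  rw [growB_row0]
  simp [Fin.val_succ]

-- entry lemmas for shrinkB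
lemma shrinkB_00 {A : Fin (k+3) → Fin (k+3) → Fin 2} : shrinkB A 0 0 = 1 := by simp [shrinkB]

lemma shrinkB_0s {A : Fin (k+3) → Fin (k+3) → Fin 2} (j : Fin (k+1)) :
    shrinkB A 0 j.succ = A 1 j.succ.succ := by
  have : ¬(((0 : Fin (k+2)):ℕ) = 0 ∧ ((j.succ : Fin (k+2)):ℕ) = 0) := by simp [Fin.val_succ]
  rw [shrinkB, if_neg this]
  rfl

lemma shrinkB_s0 {A : Fin (k+3) → Fin (k+3) → Fin 2} (i : Fin (k+1)) :
    shrinkB A i.succ 0 = A i.succ.succ 1 := by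
  have : ¬(((i.succ : Fin (k+2)):ℕ) = 0 ∧ ((0 : Fin (k+2)):ℕ) = 0) := by simp [Fin.val_succ]
  rw [shrinkB, if_neg this]
  rfl

lemma shrinkB_ss {A : Fin (k+3) → Fin (k+3) → Fin 2} (i j : Fin (k+1)) :
    shrinkB A i.succ j.succ = A i.succ.succ j.succ.succ := by
  have : ¬(((i.succ : Fin (k+2)):ℕ) = 0 ∧ ((j.succ : Fin (k+2)):ℕ) = 0) := by simp [Fin.val_succ]
  rw [shrinkB, if_neg this]

end Maps
section CaseA
variable {k : ℕ}

lemma val_ss_not_lt2 {k : ℕ} (j : Fin k) : ¬((j.succ.succ : Fin (k+2)) : ℕ) < 2 := by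
  simp [Fin.val_succ]

lemma growA_rowsum {B : Fin k → Fin k → Fin 2} (hB : ∀ i, ∑ j, (B i j : ℕ) = 2) (i : Fin (k+2)) :
    ∑ j, ((growA B) i j : ℕ) = 2 := by
  rw [sum_peel2 (growA B i)]
  rcases lt_or_ge (i:ℕ) 2 with hi | hi
  · rw [growA_tl hi (by simp), growA_tl hi (by simp)]
    have ht : ∀ j : Fin k, ((growA B i j.succ.succ : Fin 2) : ℕ) = 0 := fun j => by
      rw [growA_tr hi (val_ss_not_lt2 j)]; rfl
    rw [Finset.sum_congr rfl fun j _ => ht j]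
    simp
  · obtain ⟨i', rfl⟩ := fin_eq_ss hi
    rw [growA_bl (by omega) (by simp), growA_bl (by omega) (by simp)]
    have ht : ∀ j : Fin k, ((growA B i'.succ.succ j.succ.succ : Fin 2) : ℕ) = (B i' j : ℕ) :=
      fun j => by rw [growA_ss]
    rw [Finset.sum_congr rfl fun j _ => ht j, hB i']
    rfl

lemma growA_rowVal_lt2 {B : Fin k → Fin k → Fin 2} {i : Fin (k+2)} (hi : (i:ℕ) < 2) :
    rowVal (growA B) i = 2^(k+1) + 2^k := by
  rw [rowVal_peel2, growA_tl hi (by simp), growA_tl hi (by simp)]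
  have ht : ∀ j : Fin k, ((growA B i j.succ.succ : Fin 2) : ℕ) * 2^(k-1-(j:ℕ)) = 0 := fun j => by
    rw [growA_tr hi (val_ss_not_lt2 j)]; simp
  rw [Finset.sum_congr rfl fun j _ => ht j]
  simp

lemma growA_rowVal_ss {B : Fin k → Fin k → Fin 2} (i' : Fin k) :
    rowVal (growA B) i'.succ.succ = rowVal B i' := by
  rw [rowVal_peel2, growA_bl (val_ss_not_lt2 i') (by simp),
    growA_bl (val_ss_not_lt2 i') (by simp)]
  have ht : ∀ j : Fin k, ((growA B i'.succ.succ j.succ.succ : Fin 2) : ℕ) * 2^(k-1-(j:ℕ))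
      = (B i' j : ℕ) * 2^(k-1-(j:ℕ)) := fun j => by rw [growA_ss]
  rw [Finset.sum_congr rfl fun j _ => ht j]
  simp [rowVal]

lemma growA_rowVal_antitone {B : Fin k → Fin k → Fin 2} (hB : Antitone (rowVal B)) :
    Antitone (rowVal (growA B)) := by
  apply antitone_of_consec
  intro a b hb
  have h2k : 1 ≤ (2:ℕ)^k := Nat.one_le_two_pow
  rcases lt_or_ge (b:ℕ) 2 with hb2 | hb2
  · rw [growA_rowVal_lt2 (i := b) hb2, growA_rowVal_lt2 (i := a) (by omega)]
  · obtain ⟨b', rfl⟩ := fin_eq_ss hb2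
    rw [growA_rowVal_ss]
    rcases lt_or_ge (a:ℕ) 2 with ha2 | ha2
    · rw [growA_rowVal_lt2 ha2]
      have := rowVal_le B b'
      omega
    · obtain ⟨a', rfl⟩ := fin_eq_ss ha2
      rw [growA_rowVal_ss]
      apply hB
      rw [Fin.le_def]
      simp only [Fin.val_succ] at hb ⊢
      omega

lemma growA_mem {B : Fin k → Fin k → Fin 2} (hB : B ∈ DeltaSet k 2) :
    growA B ∈ DeltaSet (k+2) 2 := by
  refine ⟨⟨growA_rowVal_antitone hB.1.1, ?_⟩, growA_rowsum hB.2.1, ?_⟩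
  · have hc : colVal (growA B) = rowVal (growA (Tr B)) := by
      rw [← Tr_growA, rowVal_Tr]
    rw [hc]
    exact growA_rowVal_antitone (Tr_mem_Delta hB).1.1
  · intro j
    have := growA_rowsum (B := Tr B) (Tr_mem_Delta hB).2.1 j
    have he : ∀ x, growA (Tr B) j x = growA B x j := fun x => by rw [← Tr_growA]; rfl
    rwa [Finset.sum_congr rfl fun x _ => by rw [he x]] at this

lemma shrinkA_rowVal {A : Fin (k+2) → Fin (k+2) → Fin 2} {i : Fin k}
    (h0 : (A i.succ.succ 0 : ℕ) = 0) (h1 : (A i.succ.succ 1 : ℕ) = 0) :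
    rowVal (shrinkA A) i = rowVal A i.succ.succ := by
  rw [rowVal_peel2 A, h0, h1]
  simp [rowVal, shrinkA]

lemma shrinkA_row_facts {A : Fin (k+2) → Fin (k+2) → Fin 2} (hA : A ∈ DeltaSet (k+2) 2)
    (h11 : (A 1 1 : ℕ) = 1) :
    Antitone (rowVal (shrinkA A)) ∧ ∀ i, ∑ j, ((shrinkA A) i j : ℕ) = 2 := by
  obtain ⟨h00, h01, h10, hr0, hc0⟩ := corner hA
  have hc1 : ∀ i : Fin k, (A i.succ.succ 1 : ℕ) = 0 := caseA_row (Tr_mem_Delta hA) h11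
  constructor
  · intro a b hab
    rw [shrinkA_rowVal (hc0 a) (hc1 a), shrinkA_rowVal (hc0 b) (hc1 b)]
    apply hA.1.1
    rw [Fin.le_def]
    rw [Fin.le_def] at hab
    simp only [Fin.val_succ]
    omega
  · intro i
    have := sum_peel2 (A i.succ.succ)
    rw [hA.2.1 i.succ.succ, hc0 i, hc1 i] at this
    simpa [shrinkA] using this.symm

lemma shrinkA_mem {A : Fin (k+2) → Fin (k+2) → Fin 2} (hA : A ∈ DeltaSet (k+2) 2)
    (h11 : (A 1 1 : ℕ) = 1) : shrinkA A ∈ DeltaSet k 2 := by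
  obtain ⟨h1, h2⟩ := shrinkA_row_facts hA h11
  obtain ⟨h1', h2'⟩ := shrinkA_row_facts (Tr_mem_Delta hA) h11
  refine ⟨⟨h1, ?_⟩, h2, ?_⟩
  · have hc : colVal (shrinkA A) = rowVal (shrinkA (Tr A)) := by
      rw [← Tr_shrinkA, rowVal_Tr]
    rw [hc]
    exact h1'
  · exact fun j => h2' j

end CaseA
section CaseBmem
variable {k : ℕ}

lemma rowVal_B0 {B : Fin (k+2) → Fin (k+2) → Fin 2} (hB : B ∈ DeltaSet (k+2) 2) :
    rowVal B 0 = 2^(k+1) + 2^k := by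
  obtain ⟨h00, h01, h10, hr0, hc0⟩ := corner hB
  rw [rowVal_peel2, h00, h01]
  have ht : ∀ j : Fin k, (B 0 j.succ.succ : ℕ) * 2^(k-1-(j:ℕ)) = 0 := fun j => by
    rw [hr0 j]; ring
  rw [Finset.sum_congr rfl fun j _ => ht j]
  simp

lemma growB_rowVal_0 {B : Fin (k+2) → Fin (k+2) → Fin 2} :
    rowVal (growB B) 0 = 2^(k+2) + 2^(k+1) := by
  rw [rowVal_peel2]
  have h0 : (growB B 0 0 : ℕ) = 1 := by rw [growB_row0]; simp
  have h1 : (growB B 0 1 : ℕ) = 1 := by rw [growB_row0]; simp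
  rw [h0, h1]
  have ht : ∀ j : Fin (k+1), (growB B 0 j.succ.succ : ℕ) * 2^(k+1-1-(j:ℕ)) = 0 := fun j => by
    rw [growB_0ss]; simp
  rw [Finset.sum_congr rfl fun j _ => ht j]
  simp

lemma growB_rowVal_1 {B : Fin (k+2) → Fin (k+2) → Fin 2} (hB : B ∈ DeltaSet (k+2) 2) :
    rowVal (growB B) 1 = 2^(k+2) + 2^k := by
  obtain ⟨h00, h01, h10, hr0, hc0⟩ := corner hB
  rw [rowVal_peel2]
  have h0 : (growB B 1 0 : ℕ) = 1 := by
    rw [growB_col0 (by simp)]; simp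
  have h1 : (growB B 1 1 : ℕ) = 0 := by rw [growB_11]; rfl
  rw [h0, h1]
  have ht : ∀ j : Fin (k+1), (growB B 1 j.succ.succ : ℕ) * 2^(k+1-1-(j:ℕ))
      = (B 0 j.succ : ℕ) * 2^(k+1-1-(j:ℕ)) := fun j => by
    rw [growB_1ss]
  rw [Finset.sum_congr rfl fun j _ => ht j]
  rw [Fin.sum_univ_succ]
  have hB01 : (B 0 (0 : Fin (k+1)).succ : ℕ) * 2^(k+1-1-((0:Fin (k+1)):ℕ)) = 2^k := by
    have : (B 0 (0 : Fin (k+1)).succ : ℕ) = 1 := h01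
    rw [this]
    simp
  have htt : ∀ j : Fin k, (B 0 (j.succ).succ : ℕ) * 2^(k+1-1-((j.succ : Fin (k+1)):ℕ)) = 0 :=
    fun j => by rw [hr0 j]; ring
  rw [Finset.sum_congr rfl fun j _ => htt j, hB01]
  simp

lemma growB_rowVal_ss {B : Fin (k+2) → Fin (k+2) → Fin 2} (i' : Fin (k+1)) :
    rowVal (growB B) i'.succ.succ = rowVal B i'.succ := by
  rw [rowVal_peel2, rowVal_succ]
  have h0 : (growB B i'.succ.succ 0 : ℕ) = 0 := by rw [growB_ss0]; rfl
  have h1 : (growB B i'.succ.succ 1 : ℕ) = (B i'.succ 0 : ℕ) := by rw [growB_ss1]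
  rw [h0, h1]
  have ht : ∀ j : Fin (k+1), (growB B i'.succ.succ j.succ.succ : ℕ) * 2^(k+1-1-(j:ℕ))
      = (B i'.succ j.succ : ℕ) * 2^(k+1-1-(j:ℕ)) := fun j => by rw [growB_ssss]
  rw [Finset.sum_congr rfl fun j _ => ht j]
  simp

lemma growB_rowVal_antitone {B : Fin (k+2) → Fin (k+2) → Fin 2} (hB : B ∈ DeltaSet (k+2) 2) :
    Antitone (rowVal (growB B)) := by
  apply antitone_of_consec
  intro a b hb
  have h2k : 1 ≤ (2:ℕ)^k := Nat.one_le_two_pow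
  rcases Nat.lt_or_ge (b:ℕ) 2 with hb2 | hb2
  · have hb1 : (b:ℕ) = 1 := by omega
    have ha0 : (a:ℕ) = 0 := by omega
    have hbe : b = 1 := by apply Fin.ext; simp [hb1]
    have hae : a = 0 := by apply Fin.ext; simp [ha0]
    rw [hbe, hae, growB_rowVal_0, growB_rowVal_1 hB]
    have : (2:ℕ)^k ≤ 2^(k+1) := Nat.pow_le_pow_right (by norm_num) (by omega)
    omega
  · obtain ⟨b', rfl⟩ := fin_eq_ss hb2
    rw [growB_rowVal_ss]
    rcases Nat.lt_or_ge (a:ℕ) 2 with ha2 | ha2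
    · have hae : a = 1 := by apply Fin.ext; simp [Fin.val_succ] at hb ⊢; omega
      rw [hae, growB_rowVal_1 hB]
      have h1 : rowVal B b'.succ ≤ rowVal B 0 := hB.1.1 (Fin.zero_le _)
      rw [rowVal_B0 hB] at h1
      have : (2:ℕ)^(k+1) ≤ 2^(k+2) := Nat.pow_le_pow_right (by norm_num) (by omega)
      omega
    · obtain ⟨a', rfl⟩ := fin_eq_ss ha2
      rw [growB_rowVal_ss]
      apply hB.1.1
      rw [Fin.le_def]
      simp only [Fin.val_succ] at hb ⊢
      omega

lemma growB_rowsum {B : Fin (k+2) → Fin (k+2) → Fin 2} (hB : B ∈ DeltaSet (k+2) 2)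
    (i : Fin (k+3)) : ∑ j, ((growB B) i j : ℕ) = 2 := by
  obtain ⟨h00, h01, h10, hr0, hc0⟩ := corner hB
  rw [sum_peel2 (growB B i)]
  rcases Nat.lt_or_ge (i:ℕ) 2 with hi | hi
  · rcases Nat.eq_zero_or_pos (i:ℕ) with hi0 | hi1
    · have hie : i = 0 := by apply Fin.ext; simp [hi0]
      subst hie
      have h0 : (growB B 0 0 : ℕ) = 1 := by rw [growB_row0]; simp
      have h1 : (growB B 0 1 : ℕ) = 1 := by rw [growB_row0]; simp
      have ht : ∀ j : Fin (k+1), (growB B 0 j.succ.succ : ℕ) = 0 := fun j => by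
        rw [growB_0ss]; rfl
      rw [h0, h1, Finset.sum_congr rfl fun j _ => ht j]
      simp
    · have hie : i = 1 := by apply Fin.ext; simp; omega
      subst hie
      have h0 : (growB B 1 0 : ℕ) = 1 := by rw [growB_col0 (by simp)]; simp
      have h1 : (growB B 1 1 : ℕ) = 0 := by rw [growB_11]; rfl
      have ht : ∀ j : Fin (k+1), (growB B 1 j.succ.succ : ℕ) = (B 0 j.succ : ℕ) := fun j => by
        rw [growB_1ss]
      rw [h0, h1, Finset.sum_congr rfl fun j _ => ht j]
      have hs := Fin.sum_univ_succ (f := fun j : Fin (k+2) => (B 0 j : ℕ))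
      rw [hB.2.1 0, h00] at hs
      omega
  · obtain ⟨i', rfl⟩ := fin_eq_ss hi
    have h0 : (growB B i'.succ.succ 0 : ℕ) = 0 := by rw [growB_ss0]; rfl
    have h1 : (growB B i'.succ.succ 1 : ℕ) = (B i'.succ 0 : ℕ) := by rw [growB_ss1]
    have ht : ∀ j : Fin (k+1), (growB B i'.succ.succ j.succ.succ : ℕ) = (B i'.succ j.succ : ℕ) :=
      fun j => by rw [growB_ssss]
    rw [h0, h1, Finset.sum_congr rfl fun j _ => ht j]
    have hs := Fin.sum_univ_succ (f := fun j : Fin (k+2) => (B i'.succ j : ℕ))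
    rw [hB.2.1 i'.succ] at hs
    omega

lemma growB_mem {B : Fin (k+2) → Fin (k+2) → Fin 2} (hB : B ∈ DeltaSet (k+2) 2) :
    growB B ∈ DeltaSet (k+3) 2 := by
  refine ⟨⟨growB_rowVal_antitone hB, ?_⟩, growB_rowsum hB, ?_⟩
  · have hc : colVal (growB B) = rowVal (growB (Tr B)) := by
      rw [← Tr_growB, rowVal_Tr]
    rw [hc]
    exact growB_rowVal_antitone (Tr_mem_Delta hB)
  · intro j
    have := growB_rowsum (B := Tr B) (Tr_mem_Delta hB) j
    have he : ∀ x, growB (Tr B) j x = growB B x j := fun x => by rw [← Tr_growB]; rfl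
    rwa [Finset.sum_congr rfl fun x _ => by rw [he x]] at this

end CaseBmem
section ShrinkB
variable {k : ℕ}

/-- If `A i 0 = 0` and row `i` sums to 2 then its value is at most `2^(m+1) + 2^m`
(matrix with `m+2` columns). -/
lemma rowVal_bound_zero0 {n m : ℕ} {A : Fin n → Fin (m+2) → Fin 2} {i : Fin n}
    (h0 : (A i 0 : ℕ) = 0) (hs : ∑ j, (A i j : ℕ) = 2) :
    rowVal A i ≤ 2^m + 2^(m-1) := by
  rw [rowVal_peel2, h0]
  have hps := sum_peel2 (A i)
  rw [hs, h0] at hps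
  have htail : ∑ j : Fin m, (A i j.succ.succ : ℕ) * 2^(m-1-(j:ℕ))
      ≤ (∑ j : Fin m, (A i j.succ.succ : ℕ)) * 2^(m-1) :=
    wsum_le _ _ _ (fun j => Nat.pow_le_pow_right (by norm_num) (by omega))
  have h1le := fin_two_nat_le (A i 1)
  rcases Nat.eq_zero_or_pos m with hm | hm
  · subst hm
    simp only [Finset.univ_eq_empty, Finset.sum_empty] at hps
    omega
  have hpow : (2:ℕ)^m = 2 * 2^(m-1) := by
    conv_lhs => rw [show m = (m-1)+1 by omega]
    rw [pow_succ]
    ring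
  rcases fin_two_cases (A i 1) with h1 | h1
  · have hs2 : (∑ j : Fin m, (A i j.succ.succ : ℕ)) = 2 := by omega
    rw [hs2] at htail
    rw [h1]
    omega
  · have hs2 : (∑ j : Fin m, (A i j.succ.succ : ℕ)) = 1 := by omega
    rw [hs2] at htail
    rw [h1]
    omega

lemma shrinkB_rowVal_0 {A : Fin (k+3) → Fin (k+3) → Fin 2} (hA : A ∈ DeltaSet (k+3) 2)
    (h11 : (A 1 1 : ℕ) = 0) : rowVal (shrinkB A) 0 = 2^(k+1) + 2^k := by
  obtain ⟨h12, h21, hr1, hc1⟩ := caseB hA h11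
  rw [rowVal_succ]
  have h0 : (shrinkB A 0 0 : ℕ) = 1 := by rw [shrinkB_00]; rfl
  rw [h0]
  have ht : ∀ j : Fin (k+1), (shrinkB A 0 j.succ : ℕ) * 2^(k+1-1-(j:ℕ))
      = (A 1 j.succ.succ : ℕ) * 2^(k+1-1-(j:ℕ)) := fun j => by rw [shrinkB_0s]
  rw [Finset.sum_congr rfl fun j _ => ht j, Fin.sum_univ_succ]
  have h2 : (A 1 (0 : Fin (k+1)).succ.succ : ℕ) * 2^(k+1-1-((0:Fin (k+1)):ℕ)) = 2^k := by
    have he : (A 1 (0 : Fin (k+1)).succ.succ : ℕ) = 1 := h12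
    rw [he]
    simp
  have htt : ∀ j : Fin k, (A 1 (j.succ).succ.succ : ℕ) * 2^(k+1-1-((j.succ : Fin (k+1)):ℕ)) = 0 :=
    fun j => by rw [hr1 j]; ring
  rw [Finset.sum_congr rfl fun j _ => htt j, h2]
  simp

lemma shrinkB_rowVal_s {A : Fin (k+3) → Fin (k+3) → Fin 2}
    (hc0 : ∀ i : Fin (k+1), (A i.succ.succ 0 : ℕ) = 0) (i' : Fin (k+1)) :
    rowVal (shrinkB A) i'.succ = rowVal A i'.succ.succ := by
  rw [rowVal_succ, rowVal_peel2 A, hc0 i']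
  have h1 : (shrinkB A i'.succ 0 : ℕ) = (A i'.succ.succ 1 : ℕ) := by rw [shrinkB_s0]
  rw [h1]
  have ht : ∀ j : Fin (k+1), (shrinkB A i'.succ j.succ : ℕ) * 2^(k+1-1-(j:ℕ))
      = (A i'.succ.succ j.succ.succ : ℕ) * 2^(k+1-1-(j:ℕ)) := fun j => by rw [shrinkB_ss]
  rw [Finset.sum_congr rfl fun j _ => ht j]
  simp

lemma shrinkB_row_facts {A : Fin (k+3) → Fin (k+3) → Fin 2} (hA : A ∈ DeltaSet (k+3) 2)
    (h11 : (A 1 1 : ℕ) = 0) :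
    Antitone (rowVal (shrinkB A)) ∧ ∀ i, ∑ j, ((shrinkB A) i j : ℕ) = 2 := by
  obtain ⟨h00, h01, h10, hr0, hc0⟩ := corner (n := k+1) hA
  constructor
  · apply antitone_of_consec
    intro a b hb
    have hb1 : 1 ≤ (b:ℕ) := by omega
    obtain ⟨b', rfl⟩ := fin_eq_s hb1
    rw [shrinkB_rowVal_s hc0]
    rcases Nat.eq_zero_or_pos (a:ℕ) with ha0 | ha1
    · have hae : a = 0 := by apply Fin.ext; simp [ha0]
      rw [hae, shrinkB_rowVal_0 hA h11]
      exact rowVal_bound_zero0 (m := k+1) (hc0 b') (hA.2.1 b'.succ.succ)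
    · obtain ⟨a', rfl⟩ := fin_eq_s ha1
      rw [shrinkB_rowVal_s hc0]
      apply hA.1.1
      rw [Fin.le_def]
      simp only [Fin.val_succ] at hb ⊢
      omega
  · intro i
    rcases Nat.eq_zero_or_pos (i:ℕ) with hi0 | hi1
    · have hie : i = 0 := by apply Fin.ext; simp [hi0]
      subst hie
      rw [Fin.sum_univ_succ]
      have h0 : (shrinkB A 0 0 : ℕ) = 1 := by rw [shrinkB_00]; rfl
      have ht : ∀ j : Fin (k+1), (shrinkB A 0 j.succ : ℕ) = (A 1 j.succ.succ : ℕ) :=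
        fun j => by rw [shrinkB_0s]
      rw [h0, Finset.sum_congr rfl fun j _ => ht j]
      have hps := sum_peel2 (A 1)
      rw [hA.2.1 1, h10, h11] at hps
      omega
    · obtain ⟨i', rfl⟩ := fin_eq_s hi1
      rw [Fin.sum_univ_succ]
      have h0 : (shrinkB A i'.succ 0 : ℕ) = (A i'.succ.succ 1 : ℕ) := by rw [shrinkB_s0]
      have ht : ∀ j : Fin (k+1), (shrinkB A i'.succ j.succ : ℕ)
          = (A i'.succ.succ j.succ.succ : ℕ) := fun j => by rw [shrinkB_ss]
      rw [h0, Finset.sum_congr rfl fun j _ => ht j]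
      have hps := sum_peel2 (A i'.succ.succ)
      rw [hA.2.1 i'.succ.succ, hc0 i'] at hps
      omega

lemma shrinkB_mem {A : Fin (k+3) → Fin (k+3) → Fin 2} (hA : A ∈ DeltaSet (k+3) 2)
    (h11 : (A 1 1 : ℕ) = 0) : shrinkB A ∈ DeltaSet (k+2) 2 := by
  obtain ⟨h1, h2⟩ := shrinkB_row_facts hA h11
  obtain ⟨h1', h2'⟩ := shrinkB_row_facts (Tr_mem_Delta hA) h11
  refine ⟨⟨h1, ?_⟩, h2, ?_⟩
  · have hc : colVal (shrinkB A) = rowVal (shrinkB (Tr A)) := by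
      rw [← Tr_shrinkB, rowVal_Tr]
    rw [hc]
    exact h1'
  · intro j
    have := h2' j
    have he : ∀ x, shrinkB (Tr A) j x = shrinkB A x j := fun x => by rw [← Tr_shrinkB]; rfl
    rwa [Finset.sum_congr rfl fun x _ => by rw [he x]] at this

end ShrinkB
section RoundTrip
variable {k : ℕ}

lemma fin2_val_eq {a b : Fin 2} (h : (a : ℕ) = (b : ℕ)) : a = b := Fin.ext h

lemma shrinkA_growA (B : Fin k → Fin k → Fin 2) : shrinkA (growA B) = B := by
  funext i j
  exact growA_ss i j

lemma growA_shrinkA {A : Fin (k+2) → Fin (k+2) → Fin 2} (hA : A ∈ DeltaSet (k+2) 2)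
    (h11 : (A 1 1 : ℕ) = 1) : growA (shrinkA A) = A := by
  obtain ⟨h00, h01, h10, hr0, hc0⟩ := corner hA
  have hrA : ∀ j : Fin k, (A 1 j.succ.succ : ℕ) = 0 := caseA_row hA h11
  have hcA : ∀ i : Fin k, (A i.succ.succ 1 : ℕ) = 0 := caseA_row (Tr_mem_Delta hA) h11
  funext i j
  rcases Nat.lt_or_ge (i:ℕ) 2 with hi | hi
  · rcases Nat.lt_or_ge (j:ℕ) 2 with hj | hj
    · rw [growA_tl hi hj]
      apply fin2_val_eq
      rcases Nat.eq_zero_or_pos (i:ℕ) with hi0 | hi1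
      · have : i = 0 := Fin.ext (by simpa using hi0)
        subst this
        rcases Nat.eq_zero_or_pos (j:ℕ) with hj0 | hj1
        · have : j = 0 := Fin.ext (by simpa using hj0)
          subst this
          simp [h00]
        · have : j = 1 := Fin.ext (by simp; omega)
          subst this
          simp [h01]
      · have : i = 1 := Fin.ext (by simp; omega)
        subst this
        rcases Nat.eq_zero_or_pos (j:ℕ) with hj0 | hj1
        · have : j = 0 := Fin.ext (by simpa using hj0)
          subst this
          simp [h10]
        · have : j = 1 := Fin.ext (by simp; omega)
          subst this
          simp [h11]
    · obtain ⟨j', rfl⟩ := fin_eq_ss hj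
      rw [growA_tr hi (val_ss_not_lt2 j')]
      apply fin2_val_eq
      rcases Nat.eq_zero_or_pos (i:ℕ) with hi0 | hi1
      · have : i = 0 := Fin.ext (by simpa using hi0)
        subst this
        simp [hr0 j']
      · have : i = 1 := Fin.ext (by simp; omega)
        subst this
        simp [hrA j']
  · rcases Nat.lt_or_ge (j:ℕ) 2 with hj | hj
    · obtain ⟨i', rfl⟩ := fin_eq_ss hi
      rw [growA_bl (val_ss_not_lt2 i') hj]
      apply fin2_val_eq
      rcases Nat.eq_zero_or_pos (j:ℕ) with hj0 | hj1
      · have : j = 0 := Fin.ext (by simpa using hj0)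
        subst this
        simp [hc0 i']
      · have : j = 1 := Fin.ext (by simp; omega)
        subst this
        simp [hcA i']
    · obtain ⟨i', rfl⟩ := fin_eq_ss hi
      obtain ⟨j', rfl⟩ := fin_eq_ss hj
      rw [growA_ss]
      rfl

lemma shrinkB_growB {B : Fin (k+2) → Fin (k+2) → Fin 2} (hB : B ∈ DeltaSet (k+2) 2) :
    shrinkB (growB B) = B := by
  obtain ⟨h00, h01, h10, hr0, hc0⟩ := corner hB
  funext i j
  by_cases h : (i:ℕ) = 0 ∧ (j:ℕ) = 0
  · have hie : i = 0 := Fin.ext (by simpa using h.1)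
    have hje : j = 0 := Fin.ext (by simpa using h.2)
    subst hie; subst hje
    show (if ((0:Fin (k+2)):ℕ) = 0 ∧ ((0:Fin (k+2)):ℕ) = 0 then (1:Fin 2)
      else growB B (0:Fin (k+2)).succ (0:Fin (k+2)).succ) = B 0 0
    rw [if_pos (by simp)]
    exact fin2_val_eq (by simp [h00])
  · simp only [shrinkB, if_neg h]
    rw [growB_gen (by simp [Fin.val_succ]) (by simp [Fin.val_succ])
      (by simp only [Fin.val_succ]; omega)]
    congr 1 <;> (apply Fin.ext; simp [Fin.val_succ])

lemma growB_shrinkB {A : Fin (k+3) → Fin (k+3) → Fin 2} (hA : A ∈ DeltaSet (k+3) 2)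
    (h11 : (A 1 1 : ℕ) = 0) : growB (shrinkB A) = A := by
  obtain ⟨h00, h01, h10, hr0, hc0⟩ := corner (n := k+1) hA
  funext i j
  rcases Nat.eq_zero_or_pos (i:ℕ) with hi0 | hi1
  · have hie : i = 0 := Fin.ext (by simpa using hi0)
    subst hie
    rw [growB_row0]
    rcases Nat.lt_or_ge (j:ℕ) 2 with hj | hj
    · rw [if_pos hj]
      apply fin2_val_eq
      rcases Nat.eq_zero_or_pos (j:ℕ) with hj0 | hj1
      · have : j = 0 := Fin.ext (by simpa using hj0)
        subst this
        simp [h00]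
      · have : j = 1 := Fin.ext (by simp; omega)
        subst this
        simp [h01]
    · obtain ⟨j', rfl⟩ := fin_eq_ss hj
      rw [if_neg (val_ss_not_lt2 j')]
      exact (fin2_val_eq (by simp [hr0 j'])).symm
  · rcases Nat.eq_zero_or_pos (j:ℕ) with hj0 | hj1
    · have hje : j = 0 := Fin.ext (by simpa using hj0)
      subst hje
      rw [growB_col0 (by omega)]
      rcases Nat.lt_or_ge (i:ℕ) 2 with hi | hi
      · rw [if_pos hi]
        have : i = 1 := Fin.ext (by simp; omega)
        subst this
        exact (fin2_val_eq (by simp [h10])).symm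
      · obtain ⟨i', rfl⟩ := fin_eq_ss hi
        rw [if_neg (val_ss_not_lt2 i')]
        exact (fin2_val_eq (by simp [hc0 i'])).symm
    · by_cases h1 : (i:ℕ) = 1 ∧ (j:ℕ) = 1
      · have hie : i = 1 := Fin.ext (by simp [h1.1])
        have hje : j = 1 := Fin.ext (by simp [h1.2])
        subst hie; subst hje
        rw [growB_11]
        exact (fin2_val_eq (by simp [h11])).symm
      · rw [growB_gen (by omega) (by omega) h1]
        have hcond : ¬(((⟨(i:ℕ)-1, by have := i.isLt; omega⟩ : Fin (k+2)) : ℕ) = 0 ∧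
            ((⟨(j:ℕ)-1, by have := j.isLt; omega⟩ : Fin (k+2)) : ℕ) = 0) := by
          simp only []
          omega
        simp only [shrinkB, if_neg hcond]
        congr 1 <;> (apply Fin.ext; simp [Fin.val_succ]) <;> omega

end RoundTrip
section Count

lemma cardA (k : ℕ) :
    (DeltaSet (k+2) 2 ∩ {A | (A 1 1 : ℕ) = 1}).ncard = (DeltaSet k 2).ncard := by
  have hbij : Set.BijOn growA (DeltaSet k 2)
      (DeltaSet (k+2) 2 ∩ {A | (A 1 1 : ℕ) = 1}) := by
    apply Set.InvOn.bijOn (f' := shrinkA)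
    · constructor
      · intro B _
        exact shrinkA_growA B
      · intro A hA
        exact growA_shrinkA hA.1 hA.2
    · intro B hB
      refine ⟨growA_mem hB, ?_⟩
      show (growA B 1 1 : ℕ) = 1
      rw [growA_tl (by simp) (by simp)]
      rfl
    · intro A hA
      exact shrinkA_mem hA.1 hA.2
  rw [← hbij.image_eq, Set.ncard_image_of_injOn hbij.injOn]

lemma cardB (k : ℕ) :
    (DeltaSet (k+3) 2 ∩ {A | (A 1 1 : ℕ) = 0}).ncard = (DeltaSet (k+2) 2).ncard := by
  have hbij : Set.BijOn growB (DeltaSet (k+2) 2)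
      (DeltaSet (k+3) 2 ∩ {A | (A 1 1 : ℕ) = 0}) := by
    apply Set.InvOn.bijOn (f' := shrinkB)
    · constructor
      · intro B hB
        exact shrinkB_growB hB
      · intro A hA
        exact growB_shrinkB hA.1 hA.2
    · intro B hB
      refine ⟨growB_mem hB, ?_⟩
      show (growB B 1 1 : ℕ) = 0
      rw [growB_11]
      rfl
    · intro A hA
      exact shrinkB_mem hA.1 hA.2
  rw [← hbij.image_eq, Set.ncard_image_of_injOn hbij.injOn]

end Count

/-- Theorem: `δ(n+2,2) = δ(n+1,2) + δ(n,2)` for all `n ≥ 2`. -/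
theorem delta_two_fib_recurrence (n : ℕ) (hn : 2 ≤ n) :
    deltaCard (n + 2) 2 = deltaCard (n + 1) 2 + deltaCard n 2 := by
  obtain ⟨m, rfl⟩ : ∃ m, n = m + 2 := ⟨n - 2, by omega⟩
  set S := DeltaSet (m+2+2) 2 with hS
  have hsplit : S = (S ∩ {A | (A 1 1 : ℕ) = 1}) ∪ (S ∩ {A | (A 1 1 : ℕ) = 0}) := by
    ext A
    simp only [Set.mem_union, Set.mem_inter_iff, Set.mem_setOf_eq]
    constructor
    · intro h
      rcases fin_two_cases (A 1 1) with h0 | h1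
      · exact Or.inr ⟨h, h0⟩
      · exact Or.inl ⟨h, h1⟩
    · rintro (⟨h, -⟩ | ⟨h, -⟩) <;> exact h
  have hdisj : Disjoint (S ∩ {A | (A 1 1 : ℕ) = 1}) (S ∩ {A | (A 1 1 : ℕ) = 0}) := by
    rw [Set.disjoint_left]
    rintro A ⟨-, h1⟩ ⟨-, h0⟩
    simp only [Set.mem_setOf_eq] at h1 h0
    omega
  have hcount : S.ncard = (S ∩ {A | (A 1 1 : ℕ) = 1}).ncard
      + (S ∩ {A | (A 1 1 : ℕ) = 0}).ncard := by
    conv_lhs => rw [hsplit]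
    exact Set.ncard_union_eq hdisj (Set.toFinite _) (Set.toFinite _)
  have h1 : (S ∩ {A | (A 1 1 : ℕ) = 1}).ncard = deltaCard (m+2) 2 := cardA (m+2)
  have h0 : (S ∩ {A | (A 1 1 : ℕ) = 0}).ncard = deltaCard (m+3) 2 := cardB (m+1)
  show S.ncard = deltaCard (m + 2 + 1) 2 + deltaCard (m+2) 2
  rw [hcount, h1, h0]
  ring
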